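/- (Coefficient identity underlying Corollary 1.8) Suppose there is a ≥ 1 such that c(I) = a for every nonempty I ⊆ {1,…,r}. Then for every s ≥ 1, the coefficient of t^{n+a−s} in χ_c(S)(t) − t^n equals Σ_{∅≠I⊆{1,…,r}, |σ_I|=s} (−1)^{|I|}, which in turn equals the coefficient of x^s in Σ_{F} x^{|F|}(1−x)^{n−|F|}, the sum ranging over all subsets F ⊆ {1,…,n} containing no σ_i (i.e. this coefficient is the entry h_s of the h-vector of S computed with normalization (1−x)^n). -/

import Mathlib

open Finset LaurentPolynomial

noncomputable section

/-- The union `σ_I = ⋃_{i ∈ I} σ_i`. -/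
def unionOver {ι V : Type*} [DecidableEq V] (σ : ι → Finset V) (I : Finset ι) : Finset V :=
  I.sup σ

/-- The intersection graph `G_I` on the vertex set `I`. -/
def interGraph {ι V : Type*} [DecidableEq V] (σ : ι → Finset V) (I : Finset ι) :
    SimpleGraph {i // i ∈ I} where
  Adj i j := i ≠ j ∧ (σ i.1 ∩ σ j.1).Nonempty
  symm := by
    refine ⟨?_⟩
    intro i j h
    exact ⟨h.1.symm, by rw [Finset.inter_comm]; exact h.2⟩
  loopless := by refine ⟨?_⟩; intro i h; exact h.1 rfl

/-- `c(I)`, the number of connected components of `G_I`. -/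
def compCount {ι V : Type*} [DecidableEq V] (σ : ι → Finset V) (I : Finset ι) : ℕ :=
  Nat.card (interGraph σ I).ConnectedComponent

/-- Property I. -/
def PropertyI {ι V W : Type*} [DecidableEq V] [DecidableEq W]
    (σ : ι → Finset V) (α : ι → Finset W) : Prop :=
  (∀ i, (α i).card + 1 = (σ i).card) ∧
  ∀ I : Finset ι, I.Nonempty → ∀ p ∉ I,
    (unionOver σ I ∩ σ p = ∅ → unionOver α I ∩ α p = ∅) ∧
    ((unionOver σ I ∩ σ p).Nonempty →
      (unionOver α I ∩ α p).card + 1 = (unionOver σ I ∩ σ p).card)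

/-- The simplicial chromatic polynomial. -/
def simpChrom {ι : Type*} [Fintype ι] [DecidableEq ι] {n : ℕ} (σ : ι → Finset (Fin n)) :
    LaurentPolynomial ℤ :=
  T (n : ℤ) +
  ∑ I ∈ (univ : Finset ι).powerset.filter (fun I => I.Nonempty),
    (-1) ^ I.card *
      T ((n : ℤ) - ((unionOver σ I).card : ℤ) + (compCount σ I : ℤ))

/-- Faces of the complex whose minimal nonfaces are the `α i`. -/
def facesOf {ι : Type*} [Fintype ι] {N : ℕ} (α : ι → Finset (Fin N)) :
    Finset (Finset (Fin N)) :=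
  (univ : Finset (Finset (Fin N))).filter (fun F => ∀ i, ¬ α i ⊆ F)

/-- Coefficient of `t^k` in a Laurent polynomial. -/
def lcoeff (p : LaurentPolynomial ℤ) (k : ℤ) : ℤ := p.coeff k

end

lemma binom_sum {α : Type*} [DecidableEq α] (B : Finset α) :
    ∑ t ∈ B.powerset,
      (Polynomial.X : Polynomial ℤ) ^ t.card * (1 - Polynomial.X) ^ (B.card - t.card) = 1 := by
  have h := Finset.prod_add (fun _ : α => (Polynomial.X : Polynomial ℤ))
    (fun _ => 1 - Polynomial.X) B
  have h1 : (Polynomial.X : Polynomial ℤ) + (1 - Polynomial.X) = 1 := by ring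
  rw [h1] at h
  simp only [prod_const_one, prod_const] at h
  calc ∑ t ∈ B.powerset,
        (Polynomial.X : Polynomial ℤ) ^ t.card * (1 - Polynomial.X) ^ (B.card - t.card)
      = ∑ t ∈ B.powerset,
        (Polynomial.X : Polynomial ℤ) ^ t.card * (1 - Polynomial.X) ^ (B \ t).card := by
        refine Finset.sum_congr rfl fun t ht => ?_
        rw [card_sdiff_of_subset (mem_powerset.mp ht)]
    _ = 1 := h.symm

lemma sum_supset {n : ℕ} (A : Finset (Fin n)) :
    ∑ G ∈ (univ : Finset (Fin n)).powerset.filter (fun G => A ⊆ G),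
      (Polynomial.X : Polynomial ℤ) ^ G.card * (1 - Polynomial.X) ^ (n - G.card)
    = Polynomial.X ^ A.card := by
  rw [Finset.sum_nbij' (i := fun G => G \ A) (j := fun t => A ∪ t)
    (t := Aᶜ.powerset)
    (g := fun t => (Polynomial.X : Polynomial ℤ) ^ (A ∪ t).card
      * (1 - Polynomial.X) ^ (n - (A ∪ t).card))]
  · calc ∑ t ∈ Aᶜ.powerset,
        (Polynomial.X : Polynomial ℤ) ^ (A ∪ t).card * (1 - Polynomial.X) ^ (n - (A ∪ t).card)
        = ∑ t ∈ Aᶜ.powerset, Polynomial.X ^ A.card *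
            ((Polynomial.X : Polynomial ℤ) ^ t.card * (1 - Polynomial.X) ^ (Aᶜ.card - t.card)) := by
          refine Finset.sum_congr rfl fun t ht => ?_
          have hd : Disjoint A t :=
            Disjoint.mono_right (mem_powerset.mp ht) disjoint_compl_right
          have hcard : (A ∪ t).card = A.card + t.card := card_union_of_disjoint hd
          have h1 : Aᶜ.card = n - A.card := by simp [card_compl]
          rw [hcard, pow_add, mul_assoc, h1, Nat.sub_sub]
      _ = Polynomial.X ^ A.card := by rw [← mul_sum, binom_sum, mul_one]
  · intro G hG
    simp only [mem_filter, mem_powerset] at hG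
    simp only [mem_powerset]
    intro x hx
    simp only [mem_sdiff] at hx
    simp [hx.2]
  · intro t ht
    simp only [mem_powerset] at ht
    simp only [mem_filter, mem_powerset]
    exact ⟨subset_univ _, subset_union_left⟩
  · intro G hG
    simp only [mem_filter, mem_powerset] at hG
    exact union_sdiff_of_subset hG.2
  · intro t ht
    simp only [mem_powerset] at ht
    exact union_sdiff_cancel_left (Disjoint.mono_right ht disjoint_compl_right)
  · intro G hG
    simp only [mem_filter, mem_powerset] at hG
    rw [union_sdiff_of_subset hG.2]

lemma indicator_sum {n r : ℕ} (σ : Fin r → Finset (Fin n)) (G : Finset (Fin n)) :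
    ∑ I ∈ (univ : Finset (Fin r)).powerset,
      (if unionOver σ I ⊆ G then ((-1 : ℤ) ^ I.card) else 0)
    = if (∀ i, ¬ σ i ⊆ G) then 1 else 0 := by
  classical
  set J := univ.filter (fun i => σ i ⊆ G) with hJ
  have hcond : ∀ I : Finset (Fin r), (unionOver σ I ⊆ G ↔ I ⊆ J) := by
    intro I
    constructor
    · intro h i hi
      rw [hJ, mem_filter]
      exact ⟨mem_univ i, le_trans (le_sup (f := σ) hi) h⟩
    · intro h
      refine Finset.sup_le (α := Finset (Fin n)) fun i hi => ?_
      have := h hi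
      rw [hJ, mem_filter] at this
      exact this.2
  calc ∑ I ∈ (univ : Finset (Fin r)).powerset,
        (if unionOver σ I ⊆ G then ((-1 : ℤ) ^ I.card) else 0)
      = ∑ I ∈ (univ : Finset (Fin r)).powerset,
          (if I ⊆ J then ((-1 : ℤ) ^ I.card) else 0) := by
        refine Finset.sum_congr rfl fun I _ => ?_
        simp [hcond I]
    _ = ∑ I ∈ J.powerset, (-1 : ℤ) ^ I.card := by
        rw [← Finset.sum_filter]
        congr 1
        ext I
        simp [mem_powerset]
    _ = if J = ∅ then 1 else 0 := Finset.sum_powerset_neg_one_pow_card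
    _ = if (∀ i, ¬ σ i ⊆ G) then 1 else 0 := by
        congr 1
        simp only [hJ, eq_iff_iff, Finset.filter_eq_empty_iff]
        constructor
        · intro h i; exact h (mem_univ i)
        · intro h i _; exact h i

lemma poly_eq {n r : ℕ} (σ : Fin r → Finset (Fin n)) :
    (∑ F ∈ facesOf σ,
        (Polynomial.X : Polynomial ℤ) ^ F.card * (1 - Polynomial.X) ^ (n - F.card))
    = ∑ I ∈ (univ : Finset (Fin r)).powerset,
        Polynomial.C ((-1 : ℤ) ^ I.card) * Polynomial.X ^ (unionOver σ I).card := by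
  classical
  rw [facesOf]
  calc _
      = ∑ G ∈ (univ : Finset (Finset (Fin n))),
          (if (∀ i, ¬ σ i ⊆ G) then (1 : Polynomial ℤ) else 0) *
            (Polynomial.X ^ G.card * (1 - Polynomial.X) ^ (n - G.card)) := by
        rw [Finset.sum_filter]
        refine Finset.sum_congr rfl fun G _ => ?_
        split <;> simp
    _ = ∑ G ∈ (univ : Finset (Finset (Fin n))),
          ∑ I ∈ (univ : Finset (Fin r)).powerset,
            (if unionOver σ I ⊆ G then Polynomial.C ((-1 : ℤ) ^ I.card) else 0)
              * (Polynomial.X ^ G.card * (1 - Polynomial.X) ^ (n - G.card)) := by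
        refine Finset.sum_congr rfl fun G _ => ?_
        rw [← Finset.sum_mul]
        congr 1
        have h := congrArg (Polynomial.C (R := ℤ)) (indicator_sum σ G)
        rw [map_sum] at h
        simp only [apply_ite (Polynomial.C (R := ℤ)), map_zero, map_one] at h
        exact h.symm
    _ = ∑ I ∈ (univ : Finset (Fin r)).powerset,
          ∑ G ∈ (univ : Finset (Finset (Fin n))),
            (if unionOver σ I ⊆ G then Polynomial.C ((-1 : ℤ) ^ I.card) else 0)
              * (Polynomial.X ^ G.card * (1 - Polynomial.X) ^ (n - G.card)) := Finset.sum_comm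
    _ = ∑ I ∈ (univ : Finset (Fin r)).powerset,
        Polynomial.C ((-1 : ℤ) ^ I.card) * Polynomial.X ^ (unionOver σ I).card := by
        refine Finset.sum_congr rfl fun I _ => ?_
        calc ∑ G ∈ (univ : Finset (Finset (Fin n))),
              (if unionOver σ I ⊆ G then Polynomial.C ((-1 : ℤ) ^ I.card) else 0)
                * (Polynomial.X ^ G.card * (1 - Polynomial.X) ^ (n - G.card))
            = Polynomial.C ((-1 : ℤ) ^ I.card) * ∑ G ∈ (univ : Finset (Fin n)).powerset.filter
                (fun G => unionOver σ I ⊆ G),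
                  (Polynomial.X : Polynomial ℤ) ^ G.card * (1 - Polynomial.X) ^ (n - G.card) := by
              rw [mul_sum, ← Finset.powerset_univ, Finset.sum_filter]
              refine Finset.sum_congr rfl fun G _ => ?_
              split <;> simp
          _ = Polynomial.C ((-1 : ℤ) ^ I.card) * Polynomial.X ^ (unionOver σ I).card := by
              rw [sum_supset]

lemma lp_term_apply (m : ℕ) (e k : ℤ) :
    (((-1 : LaurentPolynomial ℤ) ^ m * T e : LaurentPolynomial ℤ)).coeff k
      = if e = k then (-1 : ℤ) ^ m else 0 := by
  have h : ((-1 : LaurentPolynomial ℤ) ^ m * T e : LaurentPolynomial ℤ)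
      = AddMonoidAlgebra.single e ((-1 : ℤ) ^ m) := by
    rw [LaurentPolynomial.single_eq_C_mul_T, map_pow, map_neg, map_one]
  rw [h]
  exact Finsupp.single_apply

/-- if `c(I) = a ≥ 1` for every nonempty `I`, then for every `s ≥ 1` the
coefficient of `t^{n+a−s}` in `χ_c(S)(t) − t^n` equals
`Σ_{∅≠I⊆[r], |σ_I|=s} (−1)^{|I|}`, which equals the coefficient of `x^s` in
`Σ_F x^{|F|}(1−x)^{n−|F|}` (sum over `F ⊆ [n]` containing no `σ_i`), i.e. the entry `h_s`
of the `h`-vector of `S` with normalization `(1−x)^n`. -/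
theorem stmt_7 {n r : ℕ} (σ : Fin r → Finset (Fin n)) (a : ℕ) (ha : 1 ≤ a)
    (hc : ∀ I : Finset (Fin r), I.Nonempty → compCount σ I = a)
    (s : ℕ) (hs : 1 ≤ s) :
    (lcoeff (simpChrom σ - T (n : ℤ)) ((n : ℤ) + a - s) =
      ∑ I ∈ (univ : Finset (Fin r)).powerset.filter
          (fun I => I.Nonempty ∧ (unionOver σ I).card = s), (-1 : ℤ) ^ I.card) ∧
    (∑ I ∈ (univ : Finset (Fin r)).powerset.filter
          (fun I => I.Nonempty ∧ (unionOver σ I).card = s), (-1 : ℤ) ^ I.card) =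
      (∑ F ∈ facesOf σ,
          Polynomial.X ^ F.card * (1 - Polynomial.X : Polynomial ℤ) ^ (n - F.card)).coeff s := by
  constructor
  · have hrw : simpChrom σ - T (n : ℤ) =
        ∑ I ∈ (univ : Finset (Fin r)).powerset.filter (fun I => I.Nonempty),
          (-1) ^ I.card *
            T ((n : ℤ) - ((unionOver σ I).card : ℤ) + (compCount σ I : ℤ)) := by
      rw [simpChrom, add_sub_cancel_left]
    rw [hrw, lcoeff, AddMonoidAlgebra.coeff_sum, Finsupp.finset_sum_apply, Finset.sum_filter, Finset.sum_filter]
    refine Finset.sum_congr rfl fun I _ => ?_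
    by_cases hne : I.Nonempty
    · rw [if_pos hne, hc I hne, lp_term_apply]
      by_cases hcard : (unionOver σ I).card = s
      · rw [if_pos (by omega), if_pos ⟨hne, hcard⟩]
      · rw [if_neg (by omega), if_neg (fun h => hcard h.2)]
    · rw [if_neg hne, if_neg (fun h => hne h.1)]
  · rw [poly_eq σ, Polynomial.finset_sum_coeff, Finset.sum_filter]
    refine Finset.sum_congr rfl fun I _ => ?_
    rw [Polynomial.coeff_C_mul, Polynomial.coeff_X_pow, mul_ite, mul_one, mul_zero]
    by_cases hcard : (unionOver σ I).card = s
    · have hne : I.Nonempty := by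
        rw [Finset.nonempty_iff_ne_empty]
        intro hI
        rw [hI] at hcard
        simp [unionOver] at hcard
        omega
      rw [if_pos ⟨hne, hcard⟩, if_pos hcard.symm]
    · rw [if_neg (fun h => hcard h.2), if_neg (fun h => hcard h.symm)]
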